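/- Let T, d be positive integers with T > d, and let P be a nonzero real polynomial in the variables W_1, …, W_T of total degree at most d. For each j ∈ {1, …, T}, write P = W_j²·P_j + R_j, where R_j is the sub-polynomial of P consisting of all monomials in which the exponent of W_j is at most 1 (so R_j is not divisible by W_j²). Then there exists j ∈ {1, …, T} such that ‖R_j‖ > 4^{-2^d}·‖P‖. -/

import Mathlib

open MvPolynomial

/-- Squared ℓ2 norm of the coefficient vector of a multivariate polynomial
in the standard monomial basis. -/
noncomputable def coeffNormSq {σ : Type*} (P : MvPolynomial σ ℝ) : ℝ :=
  ∑ m ∈ P.support, (P.coeff m) ^ 2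

/-- ℓ2 norm of the coefficient vector of a multivariate polynomial. -/
noncomputable def coeffNorm {σ : Type*} (P : MvPolynomial σ ℝ) : ℝ :=
  Real.sqrt (coeffNormSq P)

/-- The sub-polynomial of `P` consisting of all monomials in which the exponent
of the variable `j` is at most `1` (i.e. the part of `P` not divisible by `W_j²`). -/
noncomputable def lowPart {T : ℕ} (P : MvPolynomial (Fin T) ℝ) (j : Fin T) :
    MvPolynomial (Fin T) ℝ :=
  ∑ m ∈ P.support.filter (fun m => m j ≤ 1), monomial m (P.coeff m)

lemma coeffNormSq_nonneg {σ : Type*} (P : MvPolynomial σ ℝ) : 0 ≤ coeffNormSq P :=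
  Finset.sum_nonneg fun _ _ => sq_nonneg _

lemma lowPart_coeff {T : ℕ} (P : MvPolynomial (Fin T) ℝ) (j : Fin T) (m : Fin T →₀ ℕ) :
    (lowPart P j).coeff m = if m j ≤ 1 then P.coeff m else 0 := by
  classical
  rw [lowPart, MvPolynomial.coeff_sum]
  simp only [coeff_monomial]
  rw [Finset.sum_ite_eq' (P.support.filter fun m => m j ≤ 1) m (fun m => P.coeff m)]
  by_cases h1 : m j ≤ 1
  · by_cases h2 : m ∈ P.support
    · simp [Finset.mem_filter, h1, h2]
    · simp only [MvPolynomial.mem_support_iff, not_not] at h2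
      simp [h1, h2]
  · simp [Finset.mem_filter, h1]

lemma coeffNormSq_lowPart {T : ℕ} (P : MvPolynomial (Fin T) ℝ) (j : Fin T) :
    coeffNormSq (lowPart P j)
      = ∑ m ∈ P.support.filter (fun m => m j ≤ 1), (P.coeff m) ^ 2 := by
  classical
  have hsupp : (lowPart P j).support = P.support.filter (fun m => m j ≤ 1) := by
    ext m
    simp only [MvPolynomial.mem_support_iff, lowPart_coeff, Finset.mem_filter]
    by_cases h1 : m j ≤ 1 <;> simp [h1, and_comm]
  rw [coeffNormSq, hsupp]
  apply Finset.sum_congr rfl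
  intro m hm
  rw [lowPart_coeff]
  simp [(Finset.mem_filter.mp hm).2]

theorem stmt2 (T d : ℕ) (hT : 0 < T) (hd : 0 < d) (hTd : d < T)
    (P : MvPolynomial (Fin T) ℝ) (hP : P ≠ 0) (hPd : P.totalDegree ≤ d) :
    ∃ j : Fin T, ((4 : ℝ) ^ (2 ^ d))⁻¹ * coeffNorm P < coeffNorm (lowPart P j) := by
  classical
  by_contra hcon
  push_neg at hcon
  set S := coeffNormSq P with hSdef
  have hS0 : 0 < S := by
    apply Finset.sum_pos
    · intro m hm
      have : P.coeff m ≠ 0 := MvPolynomial.mem_support_iff.mp hm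
      positivity
    · rw [Finset.nonempty_iff_ne_empty]
      intro h
      exact hP (MvPolynomial.support_eq_empty.mp h)
  have hA : (0:ℝ) < (4:ℝ) ^ (2 ^ d) := by positivity
  -- each lowPart norm squared is small
  have hE : ∀ j : Fin T, coeffNormSq (lowPart P j) ≤ (((4:ℝ) ^ (2 ^ d))⁻¹) ^ 2 * S := by
    intro j
    have h1 := hcon j
    have hnn : 0 ≤ ((4:ℝ) ^ (2 ^ d))⁻¹ * coeffNorm P := by
      have := Real.sqrt_nonneg (coeffNormSq P)
      rw [coeffNorm]; positivity
    have h2 : coeffNorm (lowPart P j) ^ 2 ≤ (((4:ℝ) ^ (2 ^ d))⁻¹ * coeffNorm P) ^ 2 :=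
      pow_le_pow_left₀ (Real.sqrt_nonneg _) h1 2
    rw [coeffNorm, coeffNorm, Real.sq_sqrt (coeffNormSq_nonneg _), mul_pow,
      Real.sq_sqrt (coeffNormSq_nonneg _)] at h2
    exact h2
  -- counting: for each monomial, most variables have exponent ≤ 1
  have hcard : ∀ m ∈ P.support,
      T - d ≤ (Finset.univ.filter fun j : Fin T => m j ≤ 1).card := by
    intro m hm
    have hdeg : (m.sum fun _ e => e) ≤ d :=
      le_trans (MvPolynomial.le_totalDegree hm) hPd
    have hbad : (Finset.univ.filter fun j : Fin T => ¬ m j ≤ 1).card ≤ d := by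
      have hsub : (Finset.univ.filter fun j : Fin T => ¬ m j ≤ 1) ⊆ m.support := by
        intro j hj
        simp only [Finset.mem_filter, not_le] at hj
        rw [Finsupp.mem_support_iff]
        omega
      have h1 : m.support.card ≤ m.sum fun _ e => e := by
        rw [Finsupp.sum]
        calc m.support.card = ∑ a ∈ m.support, 1 := by simp
          _ ≤ ∑ a ∈ m.support, m a := by
              apply Finset.sum_le_sum
              intro a ha
              have := Finsupp.mem_support_iff.mp ha
              omega
      exact le_trans (le_trans (Finset.card_le_card hsub) h1) hdeg
    have htot := Finset.card_filter_add_card_filter_not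
      (s := (Finset.univ : Finset (Fin T))) (p := fun j : Fin T => m j ≤ 1)
    simp only [Finset.card_univ, Fintype.card_fin] at htot
    omega
  -- lower bound on the sum of lowPart norms
  have hswap : ∑ j : Fin T, coeffNormSq (lowPart P j)
      = ∑ m ∈ P.support,
          ((Finset.univ.filter fun j : Fin T => m j ≤ 1).card : ℝ) * (P.coeff m) ^ 2 := by
    simp_rw [coeffNormSq_lowPart, Finset.sum_filter]
    rw [Finset.sum_comm]
    apply Finset.sum_congr rfl
    intro m _
    rw [← Finset.sum_filter, Finset.sum_const, nsmul_eq_mul]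
  have hlower : ((T : ℝ) - d) * S ≤ ∑ j : Fin T, coeffNormSq (lowPart P j) := by
    rw [hswap, hSdef, coeffNormSq, Finset.mul_sum]
    apply Finset.sum_le_sum
    intro m hm
    apply mul_le_mul_of_nonneg_right _ (sq_nonneg _)
    have := hcard m hm
    have hcast : ((T - d : ℕ) : ℝ) = (T : ℝ) - d := by
      rw [Nat.cast_sub hTd.le]
    rw [← hcast]
    exact_mod_cast this
  have hupper : ∑ j : Fin T, coeffNormSq (lowPart P j)
      ≤ (T : ℝ) * ((((4:ℝ) ^ (2 ^ d))⁻¹) ^ 2 * S) := by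
    calc ∑ j : Fin T, coeffNormSq (lowPart P j)
        ≤ ∑ _j : Fin T, (((4:ℝ) ^ (2 ^ d))⁻¹) ^ 2 * S := Finset.sum_le_sum fun j _ => hE j
      _ = (T : ℝ) * ((((4:ℝ) ^ (2 ^ d))⁻¹) ^ 2 * S) := by
          rw [Finset.sum_const, Finset.card_univ, Fintype.card_fin, nsmul_eq_mul]
  -- combine
  set B : ℝ := ((4:ℝ) ^ (2 ^ d)) ^ 2 with hBdef
  have hB0 : 0 < B := by positivity
  have hkey : ((T : ℝ) - d) * B ≤ (T : ℝ) := by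
    have h := le_trans hlower hupper
    have h2 : ((T : ℝ) - d) ≤ (T : ℝ) * (((4:ℝ) ^ (2 ^ d))⁻¹) ^ 2 :=
      le_of_mul_le_mul_right
        (by nlinarith [h] : ((T:ℝ) - d) * S ≤ ((T:ℝ) * ((((4:ℝ) ^ (2 ^ d))⁻¹) ^ 2)) * S) hS0
    have h3 : ((T : ℝ) - d) * B ≤ ((T : ℝ) * (((4:ℝ) ^ (2 ^ d))⁻¹) ^ 2) * B :=
      mul_le_mul_of_nonneg_right h2 hB0.le
    have h4 : ((T : ℝ) * (((4:ℝ) ^ (2 ^ d))⁻¹) ^ 2) * B = (T : ℝ) := by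
      rw [hBdef]
      field_simp
    linarith [h3, h4.le]
  -- arithmetic contradiction
  have hdB : (d : ℝ) + 1 < B := by
    have h1 : d + 1 ≤ 2 ^ d := Nat.lt_two_pow_self (n := d)
    have h2 : (2:ℕ) ^ d < 4 ^ (2 ^ d) := by
      calc (2:ℕ) ^ d < 2 ^ (2 ^ d) := Nat.pow_lt_pow_right one_lt_two (Nat.lt_two_pow_self (n := d))
        _ ≤ 4 ^ (2 ^ d) := Nat.pow_le_pow_left (by norm_num) _
    have h3 : (4:ℕ) ^ (2 ^ d) ≤ (4 ^ (2 ^ d)) ^ 2 := Nat.le_self_pow (by norm_num) _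
    have : d + 1 < (4 ^ (2 ^ d)) ^ 2 := by omega
    have hcast : ((( 4 ^ (2 ^ d)) ^ 2 : ℕ) : ℝ) = B := by
      rw [hBdef]; push_cast; ring
    calc (d : ℝ) + 1 = ((d + 1 : ℕ) : ℝ) := by push_cast; ring
      _ < (((4 ^ (2 ^ d)) ^ 2 : ℕ) : ℝ) := by exact_mod_cast this
      _ = B := hcast
  have hTd' : (d : ℝ) + 1 ≤ (T : ℝ) := by exact_mod_cast hTd
  nlinarith [mul_pos (by linarith : (0:ℝ) < (T:ℝ) - d) (by linarith : (0:ℝ) < B - ((d:ℝ) + 1)), hkey, hTd', hdB]
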